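/- Let $\nu:(0,\infty)\to(0,\infty)$ satisfy conditions (H1) with constant $a_1$. If $f:\mathbb{R}^d\to[0,\infty)$ is measurable and $\int_{\mathbb{R}^d} f(y)(\nu(|y|)\wedge 1)\,dy < \infty$, then for every $x\in\mathbb{R}^d$, $\int_{\mathbb{R}^d} f(y)(\nu(|x-y|)\wedge 1)\,dy < \infty$. -/

import Mathlib

open MeasureTheory Set

theorem integrability_shift
    {d : ℕ} (hd : 1 ≤ d)
    (ν ν' : ℝ → ℝ) (a₁ : ℝ) (ha₁ : 1 ≤ a₁)
    (hpos : ∀ r > (0:ℝ), 0 < ν r)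
    (hanti : ∀ u v : ℝ, 0 < u → u ≤ v → ν v ≤ ν u)
    (habs : ∀ r > (0:ℝ), ν r = -∫ ρ in Set.Ioi r, ν' ρ)
    (hratio : ∀ u v : ℝ, 0 < u → u ≤ v → -ν' v / v ≤ -ν' u / u)
    (hdbl1 : ∀ r : ℝ, 1 ≤ r → ν r ≤ a₁ * ν (r + 1))
    (hdbl2 : ∀ r : ℝ, 0 < r → r ≤ 1 → ν r ≤ a₁ * ν (2 * r))
    (f : EuclideanSpace ℝ (Fin d) → ℝ) (hf : Measurable f) (hfnn : ∀ x, 0 ≤ f x)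
    (hint : Integrable (fun y => f y * min (ν ‖y‖) 1)) :
    ∀ x : EuclideanSpace ℝ (Fin d),
      Integrable (fun y => f y * min (ν ‖x - y‖) 1) := by
  intro x
  haveI : Nonempty (Fin d) := ⟨⟨0, hd⟩⟩
  haveI : Nontrivial (EuclideanSpace ℝ (Fin d)) := inferInstance
  set s : ℝ := ‖x‖ with hs
  have hs0 : 0 ≤ s := norm_nonneg x
  set n : ℕ := ⌈s⌉₊ with hn
  have hsn : s ≤ n := Nat.le_ceil s
  -- iterated doubling
  have hiter : ∀ k : ℕ, ∀ t : ℝ, 1 ≤ t → ν t ≤ a₁ ^ k * ν (t + k) := by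
    intro k
    induction k with
    | zero => intro t ht; simp
    | succ k ih =>
      intro t ht
      have h1 : ν t ≤ a₁ ^ k * ν (t + k) := ih t ht
      have h2 : ν (t + k) ≤ a₁ * ν (t + k + 1) := hdbl1 _ (by linarith [Nat.cast_nonneg (α := ℝ) k])
      have ha₁k : (0:ℝ) ≤ a₁ ^ k := pow_nonneg (by linarith) k
      calc ν t ≤ a₁ ^ k * ν (t + k) := h1
        _ ≤ a₁ ^ k * (a₁ * ν (t + k + 1)) := by nlinarith
        _ = a₁ ^ (k+1) * ν (t + (k+1:ℕ)) := by push_cast; ring_nf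
  have hm : 0 < min (ν (1 + s)) 1 := lt_min (hpos _ (by linarith)) one_pos
  set m : ℝ := min (ν (1 + s)) 1 with hmdef
  set C : ℝ := max (a₁ ^ n) (1 / m) with hC
  have hC1 : 1 ≤ C := le_trans (one_le_pow₀ ha₁) (le_max_left _ _)
  -- key pointwise comparison
  have key : ∀ r t : ℝ, 0 < r → 0 < t → r ≤ t + s →
      min (ν t) 1 ≤ C * min (ν r) 1 := by
    intro r t hr ht hrts
    have hminr : 0 < min (ν r) 1 := lt_min (hpos _ hr) one_pos
    rcases le_or_gt r t with hrt | htr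
    · have : min (ν t) 1 ≤ min (ν r) 1 :=
        min_le_min (hanti r t hr hrt) le_rfl
      nlinarith
    · rcases le_or_gt 1 t with ht1 | ht1
      · -- t ≥ 1
        have h1 : ν t ≤ a₁ ^ n * ν (t + n) := hiter n t ht1
        have h2 : ν (t + n) ≤ ν r := hanti r (t + n) hr (by linarith)
        have hpow : (1:ℝ) ≤ a₁ ^ n := one_le_pow₀ ha₁
        have hCn : a₁ ^ n ≤ C := le_max_left _ _
        rcases le_or_gt (ν r) 1 with h | h
        · have : min (ν r) 1 = ν r := min_eq_left h
          rw [this]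
          calc min (ν t) 1 ≤ ν t := min_le_left _ _
            _ ≤ a₁ ^ n * ν (t + n) := h1
            _ ≤ a₁ ^ n * ν r := by nlinarith [hpos r hr]
            _ ≤ C * ν r := by nlinarith [hpos r hr]
        · have : min (ν r) 1 = 1 := min_eq_right h.le
          rw [this]
          calc min (ν t) 1 ≤ 1 := min_le_right _ _
            _ ≤ C * 1 := by linarith
      · -- t < 1
        have hr1s : r ≤ 1 + s := by linarith
        have h2 : m ≤ min (ν r) 1 :=
          min_le_min (hanti r (1 + s) hr hr1s) le_rfl
        have hCm : 1 / m ≤ C := le_max_right _ _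
        calc min (ν t) 1 ≤ 1 := min_le_right _ _
          _ = (1 / m) * m := by field_simp
          _ ≤ C * min (ν r) 1 := by nlinarith
  -- measurability of y ↦ ν ‖x - y‖
  have hnorm : Measurable fun y : EuclideanSpace ℝ (Fin d) => ‖x - y‖ :=
    (continuous_const.sub continuous_id).norm.measurable
  have hmeasg : ∀ k : ℕ, Measurable fun t : ℝ => ν (max t (1 / (k + 1))) := by
    intro k
    have hk : (0:ℝ) < 1 / (k + 1) := by positivity
    have : Antitone fun t : ℝ => ν (max t (1 / (k + 1))) := by
      intro u v huv
      exact hanti _ _ (lt_max_of_lt_right hk) (max_le_max huv le_rfl)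
    exact this.measurable
  have hsup : Measurable fun t : ℝ => ⨆ k : ℕ, ν (max t (1 / (k + 1))) :=
    Measurable.iSup hmeasg
  have heq : ∀ t : ℝ, 0 < t → (⨆ k : ℕ, ν (max t (1 / (k + 1)))) = ν t := by
    intro t ht
    obtain ⟨k₀, hk₀⟩ := exists_nat_gt (1 / t)
    have hmono : Monotone fun k : ℕ => ν (max t (1 / (k + 1))) := by
      intro i j hij
      have hij' : (i:ℝ) ≤ j := by exact_mod_cast hij
      refine hanti _ _ (lt_max_of_lt_left ht) (max_le_max le_rfl ?_)
      gcongr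
    have hconst : ∀ k ≥ k₀, ν (max t (1 / (k + 1))) = ν t := by
      intro k hk
      have h1 : (1:ℝ) / (k + 1) ≤ t := by
        rw [div_le_iff₀ (by positivity)]
        rw [div_lt_iff₀ ht] at hk₀
        have : (k₀:ℝ) ≤ k := by exact_mod_cast hk
        nlinarith
      rw [max_eq_left h1]
    apply le_antisymm
    · apply ciSup_le
      intro k
      rcases le_or_gt k₀ k with h | h
      · rw [hconst k h]
      · calc ν (max t (1 / (k + 1))) ≤ ν (max t (1 / (k₀ + 1))) := hmono h.le
          _ = ν t := hconst k₀ le_rfl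
    · have := hconst k₀ le_rfl
      rw [← this]
      apply le_ciSup (f := fun k : ℕ => ν (max t (1 / (k + 1))))
      refine ⟨ν t, ?_⟩
      rintro v ⟨k, rfl⟩
      exact hanti _ _ ht (le_max_left _ _)
  -- a.e. equality on the complement of {x}
  have hx_ae : ∀ᵐ y : EuclideanSpace ℝ (Fin d), y ≠ x ∧ y ≠ 0 := by
    have h1 : (volume : Measure (EuclideanSpace ℝ (Fin d))) {x} = 0 := measure_singleton x
    have h2 : (volume : Measure (EuclideanSpace ℝ (Fin d))) {(0:EuclideanSpace ℝ (Fin d))} = 0 :=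
      measure_singleton 0
    rw [Filter.eventually_iff]
    have : {y : EuclideanSpace ℝ (Fin d) | y ≠ x ∧ y ≠ 0}ᶜ ⊆ {x} ∪ {0} := by
      intro y hy
      simp only [mem_compl_iff, mem_setOf_eq, not_and_or, not_not] at hy
      rcases hy with h | h <;> simp [h]
    have hz : (volume : Measure (EuclideanSpace ℝ (Fin d))) ({x} ∪ {0}) = 0 :=
      le_antisymm (le_trans (measure_union_le _ _) (by rw [h1, h2]; norm_num)) zero_le
    exact mem_ae_iff.2 (measure_mono_null this hz)
  have hmeas : AEStronglyMeasurable (fun y => f y * min (ν ‖x - y‖) 1)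
      (volume : Measure (EuclideanSpace ℝ (Fin d))) := by
    have h1 : Measurable fun y : EuclideanSpace ℝ (Fin d) =>
        f y * min (⨆ k : ℕ, ν (max ‖x - y‖ (1 / (k + 1)))) 1 :=
      hf.mul ((hsup.comp hnorm).min measurable_const)
    refine (h1.aestronglyMeasurable).congr ?_
    filter_upwards [hx_ae] with y hy
    have hxy : (0:ℝ) < ‖x - y‖ := by
      rw [norm_pos_iff, sub_ne_zero]
      exact fun h => hy.1 h.symm
    rw [heq _ hxy]
  refine Integrable.mono' (hint.const_mul C) hmeas ?_
  filter_upwards [hx_ae] with y hy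
  have hxy : (0:ℝ) < ‖x - y‖ := by
    rw [norm_pos_iff, sub_ne_zero]
    exact fun h => hy.1 h.symm
  have hy0 : (0:ℝ) < ‖y‖ := norm_pos_iff.2 hy.2
  have htri : ‖y‖ ≤ ‖x - y‖ + s := by
    have := norm_sub_norm_le x y
    have h := norm_add_le (x - y) (y - x + y)
    calc ‖y‖ = ‖x - (x - y)‖ := by congr 1; abel
      _ ≤ ‖x‖ + ‖x - y‖ := norm_sub_le _ _
      _ = ‖x - y‖ + s := by rw [hs]; ring
  have hb := key ‖y‖ ‖x - y‖ hy0 hxy htri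
  have hnn : 0 ≤ min (ν ‖x - y‖) 1 := le_min (hpos _ hxy).le zero_le_one
  rw [Real.norm_eq_abs, abs_of_nonneg (mul_nonneg (hfnn y) hnn)]
  calc f y * min (ν ‖x - y‖) 1 ≤ f y * (C * min (ν ‖y‖) 1) := by
        nlinarith [hfnn y]
    _ = C * (f y * min (ν ‖y‖) 1) := by ring
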